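/- Let H be a group and a, b, c ∈ H. In the quotient H/[H,[H,H]], the cyclic relation 'cba = bac = acb' holds (for the images of a, b, c) if and only if the images satisfy [b,a] = [c,b] = [c,a]⁻¹. -/

import Mathlib

open scoped commutatorElement

/-- In a group, if `⁅z,x⁆` commutes with `y`, then `z*y*x = y*x*z` iff `⁅z,y⁆ = ⁅z,x⁆⁻¹`. -/
lemma comm_mul_aux {G : Type*} [Group G] (x y z : G) (h : Commute ⁅z,x⁆ y) :
    (z*y*x = y*x*z) ↔ ⁅z,y⁆ = ⁅z,x⁆⁻¹ := by
  have hc : y * ⁅z,x⁆ = ⁅z,x⁆ * y := h.symm.eq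
  have key : z*y*x*(y*x*z)⁻¹ = ⁅z,y⁆*⁅z,x⁆ := by
    calc z*y*x*(y*x*z)⁻¹ = ⁅z,y⁆ * (y * ⁅z,x⁆ * y⁻¹) := by
          simp only [commutatorElement_def]; group
      _ = ⁅z,y⁆*⁅z,x⁆ := by rw [hc]; group
  rw [← mul_inv_eq_one, key, mul_eq_one_iff_eq_inv]

/-- In the quotient `H/[H,[H,H]]`, commutators of images are central (with respect to images). -/
lemma comm_central {H : Type*} [Group H] (u v w : H) :
    Commute ⁅((u : H ⧸ Subgroup.lowerCentralSeries (⊤ : Subgroup H) 2)), (v : H ⧸ Subgroup.lowerCentralSeries (⊤ : Subgroup H) 2)⁆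
      (w : H ⧸ Subgroup.lowerCentralSeries (⊤ : Subgroup H) 2) := by
  rw [← commutatorElement_eq_one_iff_commute]
  have m : (⁅⁅u,v⁆,w⁆ : H) ∈ Subgroup.lowerCentralSeries (⊤ : Subgroup H) 2 :=
    Subgroup.commutator_mem_commutator
      (Subgroup.commutator_mem_commutator (Subgroup.mem_top u) (Subgroup.mem_top v))
      (Subgroup.mem_top w)
  exact (QuotientGroup.eq_one_iff _).mpr m

/-- In the quotient `H/[H,[H,H]]`, the cyclic relation `cba = bac = acb` holds for the
images of `a, b, c` iff the images satisfy `[b,a] = [c,b] = [c,a]⁻¹`. -/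
theorem cyclic_relation_iff_commutators (H : Type*) [Group H] (a b c : H) :
    (((c * b * a : H) : H ⧸ Subgroup.lowerCentralSeries (⊤ : Subgroup H) 2) = ((b * a * c : H) : H ⧸ Subgroup.lowerCentralSeries (⊤ : Subgroup H) 2) ∧
     ((b * a * c : H) : H ⧸ Subgroup.lowerCentralSeries (⊤ : Subgroup H) 2) = ((a * c * b : H) : H ⧸ Subgroup.lowerCentralSeries (⊤ : Subgroup H) 2)) ↔
    ((⁅(b : H ⧸ Subgroup.lowerCentralSeries (⊤ : Subgroup H) 2), (a : H ⧸ Subgroup.lowerCentralSeries (⊤ : Subgroup H) 2)⁆ =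
        ⁅(c : H ⧸ Subgroup.lowerCentralSeries (⊤ : Subgroup H) 2), (b : H ⧸ Subgroup.lowerCentralSeries (⊤ : Subgroup H) 2)⁆) ∧
     (⁅(c : H ⧸ Subgroup.lowerCentralSeries (⊤ : Subgroup H) 2), (b : H ⧸ Subgroup.lowerCentralSeries (⊤ : Subgroup H) 2)⁆ =
        ⁅(c : H ⧸ Subgroup.lowerCentralSeries (⊤ : Subgroup H) 2), (a : H ⧸ Subgroup.lowerCentralSeries (⊤ : Subgroup H) 2)⁆⁻¹)) := by
  set Q := H ⧸ Subgroup.lowerCentralSeries (⊤ : Subgroup H) 2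
  set x : Q := (a : Q)
  set y : Q := (b : Q)
  set z : Q := (c : Q)
  have hcast : ∀ u v w : H, ((u * v * w : H) : Q) = (u : Q) * (v : Q) * (w : Q) := by
    intro u v w; rfl
  rw [hcast, hcast, hcast]
  have e1 : (z*y*x = y*x*z) ↔ ⁅z,y⁆ = ⁅z,x⁆⁻¹ := comm_mul_aux x y z (comm_central c a b)
  have e2 : (y*x*z = x*z*y) ↔ ⁅y,x⁆ = ⁅z,y⁆ := by
    rw [comm_mul_aux z x y (comm_central b c a), commutatorElement_inv]
  rw [e1, e2, and_comm]
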